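/- Let k : ℕ → ℕ be a sequence of positive natural numbers and let ⟨B_n ; n ∈ ℕ⟩ be a sequence of sets with B_n ⊆ (2^ω)^{k(n)} such that each B_n is meager in the product topology. Then there exists a nonempty perfect set P ⊆ 2^ω such that for every n and every tuple (x_0, …, x_{k(n)−1}) ∈ P^{k(n)} with pairwise distinct entries, the tuple (x_0, …, x_{k(n)−1}) does not belong to B_n. -/

import Mathlib

open Set Function Topology

namespace MycielskiAux

def cyl (t : List Bool) : Set (ℕ → Bool) := {x | ∀ m, (h : m < t.length) → x m = t[m]}

lemma isOpen_cyl (t : List Bool) : IsOpen (cyl t) := by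
  have : cyl t = ⋂ (m : Fin t.length), {x : ℕ → Bool | x m = t[(m:ℕ)]} := by
    ext x; simp [cyl, Fin.forall_iff]
  rw [this]
  refine isOpen_iInter_of_finite fun m => ?_
  have : {x : ℕ → Bool | x m = t[(m:ℕ)]} = (fun x : ℕ → Bool => x m) ⁻¹' {t[(m:ℕ)]} := rfl
  rw [this]
  exact (isOpen_discrete _).preimage (continuous_apply (m : ℕ))

lemma cyl_anti {t t' : List Bool} (h : t <+: t') : cyl t' ⊆ cyl t := by
  intro x hx m hm
  rw [hx m (hm.trans_le h.length_le), h.getElem hm]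

lemma mem_cyl_ofFn (x : ℕ → Bool) (N : ℕ) : x ∈ cyl (List.ofFn fun i : Fin N => x i) := by
  intro m hm
  simp at hm ⊢

/-- Open sets in Cantor space contain full cylinders around their points. -/
lemma exists_agree_subset {U : Set (ℕ → Bool)} (hU : IsOpen U) {x : ℕ → Bool} (hx : x ∈ U) :
    ∃ N : ℕ, ∀ y : ℕ → Bool, (∀ m < N, y m = x m) → y ∈ U := by
  obtain ⟨I, u, h1, h2⟩ := isOpen_pi_iff.mp hU x hx
  refine ⟨(I.sup id) + 1, fun y hy => h2 fun a ha => ?_⟩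
  rw [hy a (Nat.lt_succ_of_le (Finset.le_sup (f := id) ha))]
  exact (h1 a ha).2


lemma cyl_nonempty (t : List Bool) : (cyl t).Nonempty := by
  refine ⟨fun m => if h : m < t.length then t[m] else false, fun m h => ?_⟩
  simp [h]

/-- Density extension lemma: cylinders can be extended into a dense open set
in a finite power of Cantor space. -/
lemma dense_open_ext {K : ℕ} {D : Set (Fin K → (ℕ → Bool))} (hDo : IsOpen D) (hDd : Dense D)
    (u : Fin K → List Bool) :
    ∃ v : Fin K → List Bool, (∀ i, u i <+: v i) ∧
      ∀ x : Fin K → (ℕ → Bool), (∀ i, x i ∈ cyl (v i)) → x ∈ D := by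
  -- the box of cylinders is open and nonempty
  have hopen : IsOpen (univ.pi fun i => cyl (u i)) :=
    isOpen_set_pi finite_univ fun i _ => isOpen_cyl (u i)
  have hne : (univ.pi fun i => cyl (u i)).Nonempty := by
    choose f hf using fun i => cyl_nonempty (u i)
    exact ⟨f, fun i _ => hf i⟩
  obtain ⟨x, hxD, hxu⟩ := hDd.exists_mem_open hopen hne
  -- open D: get finite-coordinate description around x
  obtain ⟨I, w, h1, h2⟩ := isOpen_pi_iff.mp hDo x hxD
  -- for each i ∈ I get a bound N i
  have hN : ∀ i : Fin K, ∃ N : ℕ, ∀ y : ℕ → Bool, (∀ m < N, y m = x i m) → (i ∈ I → y ∈ w i) := by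
    intro i
    by_cases hi : i ∈ I
    · obtain ⟨N, hN⟩ := exists_agree_subset (h1 i hi).1 (h1 i hi).2
      exact ⟨N, fun y hy _ => hN y hy⟩
    · exact ⟨0, fun y _ h => absurd h hi⟩
  choose N hNspec using hN
  set M : ℕ := max (Finset.univ.sup N) (Finset.univ.sup fun i => (u i).length) with hM
  refine ⟨fun i => List.ofFn fun m : Fin M => x i m, fun i => ?_, fun y hy => ?_⟩
  · -- u i is a prefix: x i ∈ cyl (u i) and (u i).length ≤ M
    have hle : (u i).length ≤ M :=
      le_max_of_le_right (Finset.le_sup (f := fun i => (u i).length) (Finset.mem_univ i))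
    have hxc : x i ∈ cyl (u i) := hxu i (mem_univ i)
    rw [List.prefix_iff_eq_take]
    apply List.ext_getElem
    · simp [hle]
    · intro m hm hm2
      simp only [List.getElem_take, List.getElem_ofFn]
      exact (hxc m hm).symm
  · refine h2 fun i hi => ?_
    refine hNspec i (y i) (fun m hm => ?_) hi
    have hmM : m < M :=
      lt_of_lt_of_le hm (le_max_of_le_left (Finset.le_sup (f := N) (Finset.mem_univ i)))
    have := hy i m (by simpa using hmM)
    simpa using this


lemma step_ext {s K : ℕ} {D' : Set (Fin K → (ℕ → Bool))} (hDo : IsOpen D') (hDd : Dense D')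
    (ι : Fin K → (Fin s → Bool)) (hι : Injective ι) (A : (Fin s → Bool) → List Bool) :
    ∃ A' : (Fin s → Bool) → List Bool, (∀ t, A t <+: A' t) ∧
      ∀ x : Fin K → (ℕ → Bool), (∀ i, x i ∈ cyl (A' (ι i))) → x ∈ D' := by
  classical
  obtain ⟨v, hv1, hv2⟩ := dense_open_ext hDo hDd (fun i => A (ι i))
  refine ⟨fun t => if h : ∃ i, ι i = t then v h.choose else A t, ?_, ?_⟩
  · intro t
    dsimp only
    by_cases h : ∃ i, ι i = t
    · rw [dif_pos h]
      have := hv1 h.choose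
      rwa [h.choose_spec] at this
    · rw [dif_neg h]
  · intro x hx
    apply hv2
    intro i
    have h : ∃ i', ι i' = ι i := ⟨i, rfl⟩
    have hc : h.choose = i := hι h.choose_spec
    have hxi := hx i
    dsimp only at hxi
    rwa [dif_pos h, hc] at hxi

lemma fold_ext {β τ : Type*} (good : τ → (β → List Bool) → Prop)
    (hmono : ∀ (t : τ) (A A' : β → List Bool), (∀ u, A u <+: A' u) → good t A → good t A')
    (hstep : ∀ (t : τ) (A : β → List Bool), ∃ A', (∀ u : β, A u <+: A' u) ∧ good t A')
    (L : List τ) (A : β → List Bool) :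
    ∃ A', (∀ u, A u <+: A' u) ∧ ∀ t ∈ L, good t A' := by
  induction L generalizing A with
  | nil => exact ⟨A, fun u => List.prefix_refl _, by simp⟩
  | cons t L ih =>
    obtain ⟨A1, h1, hg⟩ := hstep t A
    obtain ⟨A2, h2, hL⟩ := ih A1
    refine ⟨A2, fun u => (h1 u).trans (h2 u), ?_⟩
    intro t' ht'
    rcases List.mem_cons.mp ht' with rfl | ht'
    · exact hmono _ _ _ h2 hg
    · exact hL t' ht'

section Scheme
variable (k : ℕ → ℕ) (D : (n : ℕ) → ℕ → Set (Fin (k n) → (ℕ → Bool)))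

abbrev Task (s : ℕ) : Type :=
  (n : Fin (s+1)) × (_ : Fin (s+1)) × {ι : Fin (k n) → (Fin s → Bool) // Injective ι}

noncomputable instance (s : ℕ) : Fintype (Task k s) := by
  classical
  infer_instance

lemma stage_lemma (hD : ∀ n j, IsOpen (D n j) ∧ Dense (D n j)) (s : ℕ)
    (A : (Fin s → Bool) → List Bool) :
    ∃ A' : (Fin s → Bool) → List Bool, (∀ t, A t <+: A' t) ∧
      ∀ (n j : ℕ), n ≤ s → j ≤ s → ∀ (ι : Fin (k n) → (Fin s → Bool)), Injective ι →
        ∀ x : Fin (k n) → (ℕ → Bool), (∀ i, x i ∈ cyl (A' (ι i))) → x ∈ D n j := by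
  classical
  have key := fold_ext
    (fun (τ : Task k s) (A' : (Fin s → Bool) → List Bool) =>
      ∀ x : Fin (k τ.1) → (ℕ → Bool), (∀ i, x i ∈ cyl (A' (τ.2.2.1 i))) → x ∈ D τ.1 τ.2.1)
    (fun τ A A' hext hg x hx => hg x fun i => cyl_anti (hext _) (hx i))
    (fun τ A => step_ext (hD τ.1 τ.2.1).1 (hD τ.1 τ.2.1).2 τ.2.2.1 τ.2.2.2 A)
    Finset.univ.toList A
  obtain ⟨A', hext, hgood⟩ := key
  refine ⟨A', hext, fun n j hn hj ι hι x hx => ?_⟩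
  exact hgood ⟨⟨n, Nat.lt_succ_of_le hn⟩, ⟨j, Nat.lt_succ_of_le hj⟩, ⟨ι, hι⟩⟩
    (Finset.mem_toList.mpr (Finset.mem_univ _)) x hx

variable (hD : ∀ n j, IsOpen (D n j) ∧ Dense (D n j))

noncomputable def sch : (s : ℕ) → (Fin s → Bool) → List Bool
  | 0 => fun _ => []
  | s+1 => fun t => (stage_lemma k D hD s (sch s)).choose (Fin.init t) ++ [t (Fin.last s)]

noncomputable def star (s : ℕ) : (Fin s → Bool) → List Bool :=
  (stage_lemma k D hD s (sch k D hD s)).choose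

lemma sch_succ (s : ℕ) (t : Fin (s+1) → Bool) :
    sch k D hD (s+1) t = star k D hD s (Fin.init t) ++ [t (Fin.last s)] := rfl

lemma sch_prefix_star (s : ℕ) (t : Fin s → Bool) :
    sch k D hD s t <+: star k D hD s t :=
  (stage_lemma k D hD s (sch k D hD s)).choose_spec.1 t

lemma star_good (s : ℕ) :
    ∀ (n j : ℕ), n ≤ s → j ≤ s → ∀ (ι : Fin (k n) → (Fin s → Bool)), Injective ι →
      ∀ x : Fin (k n) → (ℕ → Bool), (∀ i, x i ∈ cyl (star k D hD s (ι i))) → x ∈ D n j :=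
  (stage_lemma k D hD s (sch k D hD s)).choose_spec.2

lemma sch_length (s : ℕ) (t : Fin s → Bool) : s ≤ (sch k D hD s t).length := by
  induction s with
  | zero => simp [sch]
  | succ s ih =>
    rw [sch_succ]
    simp only [List.length_append, List.length_singleton]
    have h1 := (sch_prefix_star k D hD s (Fin.init t)).length_le
    have := ih (Fin.init t)
    omega


/-- Restriction of a branch to a finite level. -/
def restrict (z : ℕ → Bool) (s : ℕ) : Fin s → Bool := fun i => z i

lemma init_restrict (z : ℕ → Bool) (s : ℕ) :
    Fin.init (restrict z (s+1)) = restrict z s := rfl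

lemma sch_chain (z : ℕ → Bool) {s s' : ℕ} (h : s ≤ s') :
    sch k D hD s (restrict z s) <+: sch k D hD s' (restrict z s') := by
  induction s' with
  | zero =>
    rw [Nat.le_zero.mp h]
  | succ s' ih =>
    rcases Nat.lt_or_ge s (s'+1) with h' | h'
    · refine ((ih (Nat.lt_succ_iff.mp h')).trans (sch_prefix_star k D hD s' _)).trans ?_
      rw [sch_succ, init_restrict]
      exact List.prefix_append _ _
    · rw [le_antisymm h h']

/-- The limit branch map `2^ω → 2^ω` induced by the scheme. -/
noncomputable def limitF (z : ℕ → Bool) : ℕ → Bool :=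
  fun m => (sch k D hD (m+1) (restrict z (m+1))).getD m false

lemma limitF_mem (z : ℕ → Bool) (s : ℕ) :
    limitF k D hD z ∈ cyl (sch k D hD s (restrict z s)) := by
  intro m hm
  have h1 := sch_chain k D hD z (le_max_left s (m+1))
  have h2 := sch_chain k D hD z (le_max_right s (m+1))
  have hm2 : m < (sch k D hD (m+1) (restrict z (m+1))).length :=
    lt_of_lt_of_le (Nat.lt_succ_self m) (sch_length k D hD (m+1) _)
  show (sch k D hD (m+1) (restrict z (m+1))).getD m false = _
  rw [List.getD_eq_getElem _ _ hm2, h2.getElem hm2, ← h1.getElem hm]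

lemma limitF_mem_star (z : ℕ → Bool) (s : ℕ) :
    limitF k D hD z ∈ cyl (star k D hD s (restrict z s)) := by
  have h := limitF_mem k D hD z (s+1)
  rw [sch_succ, init_restrict] at h
  exact cyl_anti (List.prefix_append _ _) h

lemma limitF_agree {z z' : ℕ → Bool} {N : ℕ} (h : ∀ m < N, z m = z' m) :
    ∀ m < N, limitF k D hD z m = limitF k D hD z' m := by
  intro m hm
  have hr : restrict z N = restrict z' N := funext fun i => h i i.isLt
  have h1 := limitF_mem k D hD z N
  have h2 := limitF_mem k D hD z' N
  rw [hr] at h1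
  have hlen : m < (sch k D hD N (restrict z' N)).length :=
    lt_of_lt_of_le hm (sch_length k D hD N _)
  rw [h1 m hlen, h2 m hlen]

lemma limitF_split {z z' : ℕ → Bool} {m : ℕ} (hne : z m ≠ z' m)
    (hag : ∀ i < m, z i = z' i) : limitF k D hD z ≠ limitF k D hD z' := by
  have hr : restrict z m = restrict z' m := funext fun i => hag i i.isLt
  set L := (star k D hD m (restrict z m)).length with hL
  have key : ∀ w : ℕ → Bool, limitF k D hD w m = w m → True := fun _ _ => trivial
  have hv : ∀ w : ℕ → Bool, restrict w m = restrict z m → limitF k D hD w L = w m := by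
    intro w hw
    have h1 := limitF_mem k D hD w (m+1)
    rw [sch_succ, init_restrict, hw] at h1
    have hlen : L < (star k D hD m (restrict z m) ++ [restrict w (m+1) (Fin.last m)]).length := by
      simp [hL]
    have := h1 L hlen
    rwa [List.getElem_concat_length hL hlen] at this
  intro hcon
  have e1 := hv z rfl
  have e2 := hv z' hr.symm
  rw [hcon] at e1
  exact hne (e1.symm.trans e2)

lemma limitF_injective : Injective (limitF k D hD) := by
  intro z z' hzz
  by_contra hne
  have hex : ∃ m, z m ≠ z' m := by
    by_contra h
    push_neg at h
    exact hne (funext h)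
  classical
  have hm := Nat.find_spec hex
  have hag : ∀ i < Nat.find hex, z i = z' i := fun i hi => by
    by_contra h
    exact Nat.find_min hex hi h
  exact limitF_split k D hD hm hag hzz

lemma limitF_continuous : Continuous (limitF k D hD) := by
  apply continuous_pi
  intro m
  have : (fun z => limitF k D hD z m) =
      (fun t : Fin (m+1) → Bool => (sch k D hD (m+1) t).getD m false) ∘
        (fun z => restrict z (m+1)) := rfl
  rw [this]
  exact (continuous_of_discreteTopology).comp (continuous_pi fun i => continuous_apply (i : ℕ))

end Scheme

lemma meagre_seq {α : Type*} [TopologicalSpace α] {B : Set α} (hB : IsMeagre B) :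
    ∃ D : ℕ → Set α, (∀ j, IsOpen (D j) ∧ Dense (D j)) ∧ ∀ x, (∀ j, x ∈ D j) → x ∉ B := by
  rw [IsMeagre] at hB
  obtain ⟨S, hSo, hSd, hSc, hSsub⟩ := mem_residual_iff.mp hB
  rcases S.eq_empty_or_nonempty with rfl | hne
  · exact ⟨fun _ => univ, fun j => ⟨isOpen_univ, dense_univ⟩,
      fun x _ => hSsub (by simp)⟩
  · obtain ⟨f, rfl⟩ := hSc.exists_eq_range hne
    refine ⟨f, fun j => ⟨hSo _ (mem_range_self j), hSd _ (mem_range_self j)⟩, fun x hx => ?_⟩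
    exact hSsub (by rintro t ⟨j, rfl⟩; exact hx j)

end MycielskiAux

theorem mycielski_meager
    (k : ℕ → ℕ) (hk : ∀ n, 0 < k n)
    (B : (n : ℕ) → Set (Fin (k n) → (ℕ → Bool)))
    (hB : ∀ n, IsMeagre (B n)) :
    ∃ P : Set (ℕ → Bool), P.Nonempty ∧ Perfect P ∧
      ∀ n, ∀ x : Fin (k n) → (ℕ → Bool),
        (∀ i, x i ∈ P) → Function.Injective x → x ∉ B n := by
  classical
  have hDex : ∀ n, ∃ Dn : ℕ → Set (Fin (k n) → (ℕ → Bool)),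
      (∀ j, IsOpen (Dn j) ∧ Dense (Dn j)) ∧ ∀ x, (∀ j, x ∈ Dn j) → x ∉ B n :=
    fun n => MycielskiAux.meagre_seq (hB n)
  choose D hD1 hD2 using hDex
  set f : (ℕ → Bool) → (ℕ → Bool) := MycielskiAux.limitF k D hD1 with hf
  refine ⟨Set.range f, ⟨f (fun _ => false), Set.mem_range_self _⟩, ⟨?_, ?_⟩, ?_⟩
  · exact (isCompact_range (MycielskiAux.limitF_continuous k D hD1)).isClosed
  · rintro x ⟨z, rfl⟩
    rw [accPt_iff_nhds]
    intro U hU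
    obtain ⟨V, hVU, hVo, hxV⟩ := mem_nhds_iff.mp hU
    obtain ⟨N, hN⟩ := MycielskiAux.exists_agree_subset hVo hxV
    set z' : ℕ → Bool := fun i => if i = N then !(z i) else z i with hz'
    have hag : ∀ m < N, z' m = z m := fun m hm => by simp [hz', Nat.ne_of_lt hm]
    refine ⟨f z', ⟨hVU (hN _ (MycielskiAux.limitF_agree k D hD1 hag)), Set.mem_range_self _⟩, ?_⟩
    refine MycielskiAux.limitF_split k D hD1 (m := N) ?_ hag
    simp [hz']
  · intro n x hxP hxinj
    choose z hz using hxP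
    have hzinj : Function.Injective z := fun i i' h => hxinj (by rw [← hz i, ← hz i', h])
    apply hD2 n x
    intro j
    -- separation level for the branches
    have hsep : ∀ p : Fin (k n) × Fin (k n), p.1 ≠ p.2 → ∃ m, z p.1 m ≠ z p.2 m := by
      intro p hp
      exact Function.ne_iff.mp fun h => hp (hzinj h)
    choose msep hmsep using hsep
    set s0 : ℕ := Finset.univ.sup
      (fun p : Fin (k n) × Fin (k n) => if h : p.1 ≠ p.2 then msep p h + 1 else 0) with hs0
    set s : ℕ := max (max n j) s0 with hs
    set ι : Fin (k n) → (Fin s → Bool) := fun i => MycielskiAux.restrict (z i) s with hι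
    have hιinj : Function.Injective ι := by
      intro i i' h
      by_contra hne
      have hp : (i, i').1 ≠ (i, i').2 := hne
      have hlt : msep (i, i') hp + 1 ≤ s0 := by
        have := Finset.le_sup (f := fun p : Fin (k n) × Fin (k n) =>
          if h : p.1 ≠ p.2 then msep p h + 1 else 0) (Finset.mem_univ (i, i'))
        simp only [dif_pos hp] at this
        exact this
      have hlt2 : msep (i, i') hp < s := lt_of_lt_of_le (Nat.lt_of_succ_le hlt) (le_max_right _ _)
      have := congrFun h ⟨msep (i, i') hp, hlt2⟩
      exact hmsep (i, i') hp this
    have hn : n ≤ s := le_trans (le_max_left n j) (le_max_left _ _)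
    have hj : j ≤ s := le_trans (le_max_right n j) (le_max_left _ _)
    refine MycielskiAux.star_good k D hD1 s n j hn hj ι hιinj x ?_
    intro i
    have := MycielskiAux.limitF_mem_star k D hD1 (z i) s
    rwa [← hf, hz i] at this
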